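/- arXiv:2307.09285 — 2 statements merged into one kernel-verified Lean document; each statement's English description precedes it below -/
import Mathlib

section
/- For any standard λ-tableau t (λ an ℓ-partition of r), one has w_λ = d(t) d(t')^{-1} and ℓ(w_λ) = ℓ(d(t)) + ℓ(d(t')), where t' ∈ Std(λ') is the conjugate tableau of t, d(s) denotes the permutation with t^λ d(s) = s (respectively t^{λ'} d(t') = t'), and w_λ = d(t_λ). -/
noncomputable section

open scoped BigOperators

/-- Partial sum `l 0 + ⋯ + l (i-1)` of the parts of a composition. -/
def psum (l : ℕ → ℕ) (i : ℕ) : ℕ := ∑ j ∈ Finset.range i, l j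

/-- `l : ℕ → ℕ` represents a composition of `r` (positive parts, padded by zeros). -/
def IsCompositionOf (r : ℕ) (l : ℕ → ℕ) : Prop :=
  (∃ k, k ≤ r ∧ (∀ j, j < k → 0 < l j) ∧ (∀ j, k ≤ j → l j = 0)) ∧ psum l r = r

/-- `l : ℕ → ℕ` represents a partition of `r`. -/
def IsPartitionOf (r : ℕ) (l : ℕ → ℕ) : Prop :=
  IsCompositionOf r l ∧ ∀ i j, i ≤ j → l j ≤ l i

/-- The conjugate (dual) partition of a composition of `r`:
`(conjC r m) j = #{k : m k ≥ j+1}` (0-indexed). -/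
def conjC (r : ℕ) (m : ℕ → ℕ) : ℕ → ℕ := fun j =>
  ((Finset.range r).filter (fun k => j + 1 ≤ m k)).card

open scoped Classical in
/-- The Young subgroup `S_l ≤ S_r` of a composition `l` of `r`, i.e. the permutations
preserving each of the consecutive blocks of sizes `l 0, l 1, …` (this is the row
stabilizer of the row-reading tableau of `l`), as a finset. -/
def youngFinset (r : ℕ) (l : ℕ → ℕ) : Finset (Equiv.Perm (Fin r)) :=
  Finset.univ.filter (fun w => ∀ (p : Fin r) (i : ℕ),
    psum l i ≤ (p : ℕ) → (p : ℕ) < psum l (i + 1) →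
      psum l i ≤ (w p : ℕ) ∧ (w p : ℕ) < psum l (i + 1))

/-- The number of inversions of a permutation of `Fin r`; this equals its Coxeter
length with respect to the simple transpositions. -/
def len (r : ℕ) (w : Equiv.Perm (Fin r)) : ℕ :=
  (Finset.univ.filter (fun p : Fin r × Fin r => p.1 < p.2 ∧ w p.2 < w p.1)).card

/-- `x_l = ∑_{w ∈ S_l} w` in the group algebra `ℂ[S_r]`. -/
def xElt (r : ℕ) (l : ℕ → ℕ) : MonoidAlgebra ℂ (Equiv.Perm (Fin r)) :=
  ∑ w ∈ youngFinset r l, MonoidAlgebra.of ℂ (Equiv.Perm (Fin r)) w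

/-- `y_l = ∑_{w ∈ S_l} (-1)^{ℓ(w)} w` in the group algebra `ℂ[S_r]`. -/
def yElt (r : ℕ) (l : ℕ → ℕ) : MonoidAlgebra ℂ (Equiv.Perm (Fin r)) :=
  ∑ w ∈ youngFinset r l, ((-1 : ℂ) ^ len r w) • MonoidAlgebra.of ℂ (Equiv.Perm (Fin r)) w

/-- `l : ℕ → ℕ → ℕ` represents an `L`-multipartition of `r`: `l c` is the `c`-th
component partition (components and rows padded by zeros). -/
def IsMultipartitionOf (L r : ℕ) (l : ℕ → ℕ → ℕ) : Prop :=
  (∀ c, L ≤ c → ∀ i, l c i = 0) ∧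
  (∀ c i j, i ≤ j → l c j ≤ l c i) ∧
  (∀ c i, r ≤ i → l c i = 0) ∧
  (∑ c ∈ Finset.range L, psum (l c) r) = r

/-- `asum r l i` is the total number of boxes in the first `i` components. -/
def asum (r : ℕ) (l : ℕ → ℕ → ℕ) (i : ℕ) : ℕ := ∑ c ∈ Finset.range i, psum (l c) r

/-- The (0-indexed) row-reading index of the cell in row `a`, column `b` of component `c`
of the multipartition `l`; this is the entry of the maximal standard tableau `t^λ` at
that cell. -/
def rowIdxMP (r : ℕ) (l : ℕ → ℕ → ℕ) (c a b : ℕ) : ℕ := asum r l c + psum (l c) a + b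

/-- The conjugate (dual) of an `L`-multipartition of `r`: component `c` of the dual is
the conjugate of component `L-1-c`. -/
def conjMP (L r : ℕ) (l : ℕ → ℕ → ℕ) : ℕ → ℕ → ℕ := fun c =>
  if c < L then conjC r (l (L - 1 - c)) else fun _ => 0

/-- `d : S_r` encodes the standard `λ`-tableau `t = t^λ d` (whose entry at a cell is `d`
applied to the row-reading index of the cell): entries increase along rows and down
columns of every component. -/
def IsStdMP (r : ℕ) (l : ℕ → ℕ → ℕ) (d : Equiv.Perm (Fin r)) : Prop :=
  (∀ c a b, b + 1 < l c a →
    ∀ (h1 : rowIdxMP r l c a b < r) (h2 : rowIdxMP r l c a (b + 1) < r),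
      d ⟨rowIdxMP r l c a b, h1⟩ < d ⟨rowIdxMP r l c a (b + 1), h2⟩) ∧
  (∀ c a b, b < l c (a + 1) →
    ∀ (h1 : rowIdxMP r l c a b < r) (h2 : rowIdxMP r l c (a + 1) b < r),
      d ⟨rowIdxMP r l c a b, h1⟩ < d ⟨rowIdxMP r l c (a + 1) b, h2⟩)

namespace WLaux

lemma psum_succ (f : ℕ → ℕ) (i : ℕ) : psum f (i+1) = psum f i + f i :=
  Finset.sum_range_succ f i

lemma psum_mono (f : ℕ → ℕ) {i j : ℕ} (h : i ≤ j) : psum f i ≤ psum f j :=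
  Finset.sum_le_sum_of_subset (Finset.range_subset_range.2 h)

lemma blockOf (f : ℕ → ℕ) (k n : ℕ) (h : n < psum f k) :
    ∃ i, i < k ∧ psum f i ≤ n ∧ n < psum f (i+1) := by
  induction k with
  | zero => simp [psum] at h
  | succ k ih =>
    rcases lt_or_ge n (psum f k) with h' | h'
    · obtain ⟨i, hi, h1, h2⟩ := ih h'
      exact ⟨i, Nat.lt_succ_of_lt hi, h1, h2⟩
    · exact ⟨k, Nat.lt_succ_self k, h', h⟩

lemma asum_succ (r : ℕ) (f : ℕ → ℕ → ℕ) (c : ℕ) :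
    asum r f (c+1) = asum r f c + psum (f c) r :=
  Finset.sum_range_succ _ c

lemma asum_mono (r : ℕ) (f : ℕ → ℕ → ℕ) {i j : ℕ} (h : i ≤ j) :
    asum r f i ≤ asum r f j :=
  Finset.sum_le_sum_of_subset (Finset.range_subset_range.2 h)

section Indexing

variable {r L : ℕ} {f : ℕ → ℕ → ℕ}

lemma cell_a_lt (H1 : ∀ c a, r ≤ a → f c a = 0) {c a b : ℕ} (h : b < f c a) : a < r := by
  by_contra h'
  rw [H1 c a (le_of_not_gt h')] at h; omega

lemma cell_c_lt (H2 : ∀ c a, L ≤ c → f c a = 0) {c a b : ℕ} (h : b < f c a) : c < L := by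
  by_contra h'
  rw [H2 c a (le_of_not_gt h')] at h; omega

lemma idx_lt_asum (H1 : ∀ c a, r ≤ a → f c a = 0) {c a b : ℕ} (h : b < f c a) :
    rowIdxMP r f c a b < asum r f (c+1) := by
  have ha : a < r := cell_a_lt H1 h
  have h1 : psum (f c) a + b < psum (f c) (a+1) := by
    rw [psum_succ]; omega
  have h2 : psum (f c) (a+1) ≤ psum (f c) r := psum_mono _ ha
  have h3 : asum r f (c+1) = asum r f c + psum (f c) r := asum_succ r f c
  unfold rowIdxMP; omega

lemma idx_lt (H1 : ∀ c a, r ≤ a → f c a = 0) (H2 : ∀ c a, L ≤ c → f c a = 0)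
    (H3 : asum r f L = r) {c a b : ℕ} (h : b < f c a) :
    rowIdxMP r f c a b < r := by
  have hc : c < L := cell_c_lt H2 h
  calc rowIdxMP r f c a b < asum r f (c+1) := idx_lt_asum H1 h
    _ ≤ asum r f L := asum_mono r f hc
    _ = r := H3

lemma idx_lt_idx (H1 : ∀ c a, r ≤ a → f c a = 0) {c a b c₁ a₁ b₁ : ℕ}
    (h : b < f c a) (h₁ : b₁ < f c₁ a₁)
    (hlex : c < c₁ ∨ (c = c₁ ∧ (a < a₁ ∨ (a = a₁ ∧ b < b₁)))) :
    rowIdxMP r f c a b < rowIdxMP r f c₁ a₁ b₁ := by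
  rcases hlex with hc | ⟨rfl, ha | ⟨rfl, hb⟩⟩
  · calc rowIdxMP r f c a b < asum r f (c+1) := idx_lt_asum H1 h
      _ ≤ asum r f c₁ := asum_mono r f hc
      _ ≤ asum r f c₁ + psum (f c₁) a₁ + b₁ := by omega
      _ = rowIdxMP r f c₁ a₁ b₁ := rfl
  · have k1 : psum (f c) a + b < psum (f c) (a+1) := by rw [psum_succ]; omega
    have k2 : psum (f c) (a+1) ≤ psum (f c) a₁ := psum_mono _ ha
    unfold rowIdxMP; omega
  · unfold rowIdxMP; omega

lemma idx_reflect (H1 : ∀ c a, r ≤ a → f c a = 0) {c a b c₁ a₁ b₁ : ℕ}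
    (h : b < f c a) (h₁ : b₁ < f c₁ a₁)
    (hidx : rowIdxMP r f c a b < rowIdxMP r f c₁ a₁ b₁) :
    c < c₁ ∨ (c = c₁ ∧ (a < a₁ ∨ (a = a₁ ∧ b < b₁))) := by
  rcases Nat.lt_trichotomy c c₁ with hc | rfl | hc
  · exact Or.inl hc
  · rcases Nat.lt_trichotomy a a₁ with ha | rfl | ha
    · exact Or.inr ⟨rfl, Or.inl ha⟩
    · rcases Nat.lt_trichotomy b b₁ with hb | rfl | hb
      · exact Or.inr ⟨rfl, Or.inr ⟨rfl, hb⟩⟩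
      · exact absurd hidx (lt_irrefl _)
      · exact absurd (idx_lt_idx H1 h₁ h (Or.inr ⟨rfl, Or.inr ⟨rfl, hb⟩⟩))
          (by omega)
    · exact absurd (idx_lt_idx H1 h₁ h (Or.inr ⟨rfl, Or.inl ha⟩)) (by omega)
  · exact absurd (idx_lt_idx H1 h₁ h (Or.inl hc)) (by omega)

lemma idx_surj (H3 : asum r f L = r) {n : ℕ} (hn : n < r) :
    ∃ c a b, b < f c a ∧ rowIdxMP r f c a b = n := by
  have hn' : n < asum r f L := by rw [H3]; exact hn
  obtain ⟨c, _, hc1, hc2⟩ := blockOf (fun c => psum (f c) r) L n hn'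
  have hc1' : asum r f c ≤ n := hc1
  have hc2' : n < asum r f c + psum (f c) r := by
    rw [psum_succ] at hc2; exact hc2
  obtain ⟨a, _, ha1, ha2⟩ := blockOf (f c) r (n - asum r f c) (by omega)
  rw [psum_succ] at ha2
  refine ⟨c, a, n - asum r f c - psum (f c) a, by omega, ?_⟩
  unfold rowIdxMP; omega

end Indexing

section Conj

variable {r : ℕ} {m : ℕ → ℕ}

lemma conjC_pos (hm0 : ∀ i, r ≤ i → m i = 0) (hmono : ∀ i j, i ≤ j → m j ≤ m i)
    {a b : ℕ} (hb : b < m a) : a < conjC r m b := by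
  have ha : a < r := by
    by_contra h'; rw [hm0 a (le_of_not_gt h')] at hb; omega
  have hsub : Finset.range (a+1) ⊆ (Finset.range r).filter (fun k => b + 1 ≤ m k) := by
    intro j hj
    rw [Finset.mem_range] at hj
    rw [Finset.mem_filter, Finset.mem_range]
    have := hmono j a (by omega)
    exact ⟨by omega, by omega⟩
  have := Finset.card_le_card hsub
  rw [Finset.card_range] at this
  unfold conjC; omega

lemma conjC_zero (hle : ∀ k, m k ≤ r) {b : ℕ} (hb : r ≤ b) : conjC r m b = 0 := by
  unfold conjC
  rw [Finset.card_eq_zero, Finset.filter_eq_empty_iff]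
  intro k _
  have := hle k; omega

lemma psum_conjC (hle : ∀ k, m k ≤ r) : psum (conjC r m) r = psum m r := by
  unfold psum conjC
  simp_rw [Finset.card_filter]
  rw [Finset.sum_comm]
  refine Finset.sum_congr rfl (fun k _ => ?_)
  rw [← Finset.card_filter]
  have : (Finset.range r).filter (fun j => j + 1 ≤ m k) = Finset.range (m k) := by
    ext j
    rw [Finset.mem_filter, Finset.mem_range, Finset.mem_range]
    have := hle k; omega
  rw [this, Finset.card_range]

end Conj

section MP

variable {L r : ℕ} {l : ℕ → ℕ → ℕ}

lemma part_le (hmp : IsMultipartitionOf L r l) (c k : ℕ) : l c k ≤ r := by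
  rcases le_or_gt r k with h | h
  · rw [hmp.2.2.1 c k h]; omega
  rcases le_or_gt L c with h' | h'
  · rw [hmp.1 c h' k]; omega
  have h1 : l c k ≤ psum (l c) r :=
    Finset.single_le_sum (f := l c) (fun i _ => Nat.zero_le _) (Finset.mem_range.2 h)
  have h2 : psum (l c) r ≤ asum r l L :=
    Finset.single_le_sum (f := fun c => psum (l c) r) (fun i _ => Nat.zero_le _)
      (Finset.mem_range.2 h')
  have h3 := hmp.2.2.2
  have h4 : asum r l L = r := h3
  omega

lemma conjMP_eq {c : ℕ} (hc : c < L) : conjMP L r l (L - 1 - c) = conjC r (l c) := by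
  have h' : L - 1 - (L - 1 - c) = c := by omega
  unfold conjMP
  rw [if_pos (by omega : L - 1 - c < L), h']

lemma conjMP_H1 (hmp : IsMultipartitionOf L r l) :
    ∀ c a, r ≤ a → conjMP L r l c a = 0 := by
  intro c a ha
  unfold conjMP
  split
  · exact conjC_zero (fun k => part_le hmp _ k) ha
  · rfl

lemma conjMP_H2 (_hmp : IsMultipartitionOf L r l) :
    ∀ c a, L ≤ c → conjMP L r l c a = 0 := by
  intro c a hc
  unfold conjMP
  rw [if_neg (by omega)]

lemma conjMP_H3 (hmp : IsMultipartitionOf L r l) : asum r (conjMP L r l) L = r := by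
  unfold asum
  have step1 : ∀ c ∈ Finset.range L,
      psum (conjMP L r l c) r = psum (conjC r (l (L - 1 - c))) r := by
    intro c hc
    rw [Finset.mem_range] at hc
    unfold conjMP
    rw [if_pos hc]
  rw [Finset.sum_congr rfl step1]
  rw [Finset.sum_range_reflect (fun c => psum (conjC r (l c)) r) L]
  have step2 : ∀ c ∈ Finset.range L, psum (conjC r (l c)) r = psum (l c) r :=
    fun c _ => psum_conjC (fun k => part_le hmp c k)
  rw [Finset.sum_congr rfl step2]
  exact hmp.2.2.2

lemma conj_cell (hmp : IsMultipartitionOf L r l) {c a b : ℕ} (h : b < l c a) :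
    a < conjMP L r l (L - 1 - c) b := by
  have hc : c < L := cell_c_lt (fun c a hLc => hmp.1 c hLc a) h
  rw [conjMP_eq hc]
  exact conjC_pos (hmp.2.2.1 c) (hmp.2.1 c) h

end MP

end WLaux
namespace WLaux

section Std

variable {L r : ℕ} {l : ℕ → ℕ → ℕ} {d : Equiv.Perm (Fin r)}

lemma std_row_mono (hmp : IsMultipartitionOf L r l) (hd : IsStdMP r l d)
    (c a b : ℕ) (p1 : rowIdxMP r l c a b < r) :
    ∀ b₁ (_ : b < b₁) (_ : b₁ < l c a) (p2 : rowIdxMP r l c a b₁ < r),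
      d ⟨rowIdxMP r l c a b, p1⟩ < d ⟨rowIdxMP r l c a b₁, p2⟩ := by
  intro b₁
  induction b₁ with
  | zero => intro hb _ _; exact absurd hb (Nat.not_lt_zero b)
  | succ k ih =>
    intro hb h₁ p2
    rcases Nat.lt_or_ge b k with hbk | hbk
    · have hk : k < l c a := by omega
      have pk : rowIdxMP r l c a k < r :=
        idx_lt hmp.2.2.1 (fun c a h => hmp.1 c h a) hmp.2.2.2 hk
      exact lt_trans (ih hbk hk pk) (hd.1 c a k h₁ pk p2)
    · have hbk' : b = k := by omega
      subst hbk'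
      exact hd.1 c a b h₁ p1 p2

lemma std_col_mono (hmp : IsMultipartitionOf L r l) (hd : IsStdMP r l d)
    (c a b : ℕ) (p1 : rowIdxMP r l c a b < r) :
    ∀ a₁ (_ : a < a₁) (_ : b < l c a₁) (p2 : rowIdxMP r l c a₁ b < r),
      d ⟨rowIdxMP r l c a b, p1⟩ < d ⟨rowIdxMP r l c a₁ b, p2⟩ := by
  intro a₁
  induction a₁ with
  | zero => intro ha _ _; exact absurd ha (Nat.not_lt_zero a)
  | succ k ih =>
    intro ha h₁ p2
    rcases Nat.lt_or_ge a k with hak | hak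
    · have hk : b < l c k := lt_of_lt_of_le h₁ (hmp.2.1 c k (k+1) (by omega))
      have pk : rowIdxMP r l c k b < r :=
        idx_lt hmp.2.2.1 (fun c a h => hmp.1 c h a) hmp.2.2.2 hk
      exact lt_trans (ih hak hk pk) (hd.2 c k b h₁ pk p2)
    · have hak' : a = k := by omega
      subst hak'
      exact hd.2 c a b h₁ p1 p2

lemma std_mono (hmp : IsMultipartitionOf L r l) (hd : IsStdMP r l d)
    {c a b a₁ b₁ : ℕ} (haa : a ≤ a₁) (hbb : b ≤ b₁) (hne : a ≠ a₁ ∨ b ≠ b₁)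
    (h₁ : b₁ < l c a₁) (p1 : rowIdxMP r l c a b < r) (p2 : rowIdxMP r l c a₁ b₁ < r) :
    d ⟨rowIdxMP r l c a b, p1⟩ < d ⟨rowIdxMP r l c a₁ b₁, p2⟩ := by
  have hdec : l c a₁ ≤ l c a := hmp.2.1 c a a₁ haa
  rcases Nat.lt_or_ge a a₁ with ha | ha
  · rcases Nat.lt_or_ge b b₁ with hb | hb
    · have hmid : b₁ < l c a := by omega
      have pmid : rowIdxMP r l c a b₁ < r :=
        idx_lt hmp.2.2.1 (fun c a h => hmp.1 c h a) hmp.2.2.2 hmid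
      exact lt_trans (std_row_mono hmp hd c a b p1 b₁ hb hmid pmid)
        (std_col_mono hmp hd c a b₁ pmid a₁ ha h₁ p2)
    · have hb' : b = b₁ := by omega
      subst hb'
      exact std_col_mono hmp hd c a b p1 a₁ ha h₁ p2
  · have ha' : a = a₁ := by omega
    subst ha'
    have hb : b < b₁ := by omega
    exact std_row_mono hmp hd c a b p1 b₁ hb h₁ p2

end Std

section ClaimA

variable {L r : ℕ} {l : ℕ → ℕ → ℕ} {d w : Equiv.Perm (Fin r)}

lemma claimA (hmp : IsMultipartitionOf L r l) (hd : IsStdMP r l d)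
    (hw : ∀ c a b, b < l c a →
      ∀ (h1 : rowIdxMP r l c a b < r) (h2 : rowIdxMP r (conjMP L r l) (L - 1 - c) b a < r),
        w ⟨rowIdxMP r l c a b, h1⟩ = ⟨rowIdxMP r (conjMP L r l) (L - 1 - c) b a, h2⟩) :
    ∀ p q : Fin r, p < q → d q < d p → w q < w p := by
  have H1 : ∀ c a, r ≤ a → l c a = 0 := hmp.2.2.1
  have H2 : ∀ c a, L ≤ c → l c a = 0 := fun c a h => hmp.1 c h a
  have H3 : asum r l L = r := hmp.2.2.2
  intro p q hpq hdqp
  obtain ⟨c, a, b, hx, hxi⟩ := idx_surj H3 p.isLt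
  obtain ⟨c₁, a₁, b₁, hy, hyi⟩ := idx_surj H3 q.isLt
  have hp : p = ⟨rowIdxMP r l c a b, idx_lt H1 H2 H3 hx⟩ := by
    apply Fin.ext; simp [hxi]
  have hq : q = ⟨rowIdxMP r l c₁ a₁ b₁, idx_lt H1 H2 H3 hy⟩ := by
    apply Fin.ext; simp [hyi]
  subst hp; subst hq
  have hlex : c < c₁ ∨ (c = c₁ ∧ (a < a₁ ∨ (a = a₁ ∧ b < b₁))) :=
    idx_reflect H1 hx hy hpq
  -- conjugate cells
  have hcx : a < conjMP L r l (L - 1 - c) b := conj_cell hmp hx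
  have hcy : a₁ < conjMP L r l (L - 1 - c₁) b₁ := conj_cell hmp hy
  have px' : rowIdxMP r (conjMP L r l) (L - 1 - c) b a < r :=
    idx_lt (conjMP_H1 hmp) (conjMP_H2 hmp) (conjMP_H3 hmp) hcx
  have py' : rowIdxMP r (conjMP L r l) (L - 1 - c₁) b₁ a₁ < r :=
    idx_lt (conjMP_H1 hmp) (conjMP_H2 hmp) (conjMP_H3 hmp) hcy
  rw [hw c a b hx (idx_lt H1 H2 H3 hx) px', hw c₁ a₁ b₁ hy (idx_lt H1 H2 H3 hy) py']
  rw [Fin.mk_lt_mk]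
  apply idx_lt_idx (conjMP_H1 hmp) hcy hcx
  have hc₁L : c₁ < L := cell_c_lt H2 hy
  rcases hlex with hc | ⟨rfl, ha | ⟨rfl, hb⟩⟩
  · exact Or.inl (by omega)
  · -- same component, a < a₁ : must have b₁ < b, else d-inversion impossible
    rcases Nat.lt_or_ge b₁ b with hb | hb
    · exact Or.inr ⟨rfl, Or.inl hb⟩
    · exact absurd (std_mono hmp hd (le_of_lt ha) hb (Or.inl (Nat.ne_of_lt ha)) hy
        (idx_lt H1 H2 H3 hx) (idx_lt H1 H2 H3 hy)) (lt_asymm hdqp)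
  · exact absurd (std_mono hmp hd (le_refl a) (le_of_lt hb) (Or.inr (Nat.ne_of_lt hb)) hy
      (idx_lt H1 H2 H3 hx) (idx_lt H1 H2 H3 hy)) (lt_asymm hdqp)

end ClaimA

lemma len_inv (r : ℕ) (σ : Equiv.Perm (Fin r)) : len r σ⁻¹ = len r σ := by
  unfold len
  apply Finset.card_bij' (fun p _ => (σ⁻¹ p.2, σ⁻¹ p.1)) (fun p _ => (σ p.2, σ p.1))
  · intro a ha
    simp only [Finset.mem_filter, Finset.mem_univ, true_and] at ha ⊢
    exact ⟨ha.2, by simpa using ha.1⟩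
  · intro a ha
    simp only [Finset.mem_filter, Finset.mem_univ, true_and] at ha ⊢
    exact ⟨ha.2, by simpa using ha.1⟩
  · intro a _; simp
  · intro a _; simp

end WLaux
/-- Let `l` be an `L`-multipartition of `r`.  Let `d` encode a standard
`λ`-tableau `t` (via `t = t^λ d`), let `d'` encode the conjugate standard `λ'`-tableau
`t'` (so the entry of `t'` at the conjugate cell `(L-1-c, b, a)` equals the entry of `t`
at `(c, a, b)`), and let `w` be the permutation `w_λ = d(t_λ)` (sending the row-reading
index of each cell of `λ` to the row-reading index of the conjugate cell in `λ'`).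
Then `w_λ = d(t) d(t')⁻¹` (in our left-evaluation convention, `w = d'⁻¹ * d`) and
`ℓ(w_λ) = ℓ(d(t)) + ℓ(d(t'))`. -/
theorem wlambda_factorization_through_conjugate (L r : ℕ) (l : ℕ → ℕ → ℕ)
    (hmp : IsMultipartitionOf L r l)
    (d d' w : Equiv.Perm (Fin r))
    (hd : IsStdMP r l d) (hd' : IsStdMP r (conjMP L r l) d')
    (hconj : ∀ c a b, b < l c a →
      ∀ (h1 : rowIdxMP r l c a b < r) (h2 : rowIdxMP r (conjMP L r l) (L - 1 - c) b a < r),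
        d' ⟨rowIdxMP r (conjMP L r l) (L - 1 - c) b a, h2⟩ = d ⟨rowIdxMP r l c a b, h1⟩)
    (hw : ∀ c a b, b < l c a →
      ∀ (h1 : rowIdxMP r l c a b < r) (h2 : rowIdxMP r (conjMP L r l) (L - 1 - c) b a < r),
        w ⟨rowIdxMP r l c a b, h1⟩ = ⟨rowIdxMP r (conjMP L r l) (L - 1 - c) b a, h2⟩) :
    w = d'⁻¹ * d ∧ len r w = len r d + len r d' := by
  have H1 : ∀ c a, r ≤ a → l c a = 0 := hmp.2.2.1
  have H2 : ∀ c a, L ≤ c → l c a = 0 := fun c a h => hmp.1 c h a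
  have H3 : asum r l L = r := hmp.2.2.2
  -- Part 1: factorization
  have part1 : w = d'⁻¹ * d := by
    apply Equiv.ext
    intro p
    obtain ⟨c, a, b, hx, hxi⟩ := WLaux.idx_surj H3 p.isLt
    have hp : p = ⟨rowIdxMP r l c a b, WLaux.idx_lt H1 H2 H3 hx⟩ := by
      apply Fin.ext; simp [hxi]
    subst hp
    have hcx : a < conjMP L r l (L - 1 - c) b := WLaux.conj_cell hmp hx
    have px' : rowIdxMP r (conjMP L r l) (L - 1 - c) b a < r :=
      WLaux.idx_lt (WLaux.conjMP_H1 hmp) (WLaux.conjMP_H2 hmp) (WLaux.conjMP_H3 hmp) hcx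
    rw [hw c a b hx (WLaux.idx_lt H1 H2 H3 hx) px', Equiv.Perm.mul_apply,
      ← hconj c a b hx (WLaux.idx_lt H1 H2 H3 hx) px', ← Equiv.Perm.mul_apply, inv_mul_cancel, Equiv.Perm.one_apply]
  refine ⟨part1, ?_⟩
  -- Part 2: lengths
  have claimA : ∀ p q : Fin r, p < q → d q < d p → w q < w p :=
    WLaux.claimA hmp hd hw
  classical
  set A := Finset.univ.filter (fun p : Fin r × Fin r => p.1 < p.2 ∧ w p.2 < w p.1) with hA
  set B := Finset.univ.filter (fun p : Fin r × Fin r => p.1 < p.2 ∧ d p.2 < d p.1) with hB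
  have hBA : B ⊆ A := by
    intro x hx
    rw [hB, Finset.mem_filter] at hx
    rw [hA, Finset.mem_filter]
    exact ⟨Finset.mem_univ x, hx.2.1, claimA x.1 x.2 hx.2.1 hx.2.2⟩
  have hsplit : (A \ B).card + B.card = A.card := Finset.card_sdiff_add_card_eq_card hBA
  have hwmem : ∀ x : Fin r × Fin r, w x.2 < w x.1 ↔ d'⁻¹ (d x.2) < d'⁻¹ (d x.1) := by
    intro x; rw [part1]; rfl
  have hAB : (A \ B).card = len r d'⁻¹ := by
    unfold len
    apply Finset.card_bij' (fun p _ => (d p.1, d p.2)) (fun p _ => (d⁻¹ p.1, d⁻¹ p.2))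
    · intro x hxm
      rw [Finset.mem_sdiff, hA, hB, Finset.mem_filter, Finset.mem_filter] at hxm
      obtain ⟨⟨-, hlt, hwin⟩, hnB⟩ := hxm
      simp only [Finset.mem_univ, true_and, not_and, not_lt] at hnB
      have hdle : d x.1 ≤ d x.2 := hnB hlt
      have hdne : d x.1 ≠ d x.2 := fun h => absurd (d.injective h) (ne_of_lt hlt)
      simp only [Finset.mem_filter, Finset.mem_univ, true_and]
      exact ⟨lt_of_le_of_ne hdle hdne, (hwmem x).1 hwin⟩
    · intro y hym
      simp only [Finset.mem_filter, Finset.mem_univ, true_and] at hym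
      obtain ⟨hlt, hinv⟩ := hym
      have hwlt : w (d⁻¹ y.2) < w (d⁻¹ y.1) := by
        rw [hwmem (d⁻¹ y.1, d⁻¹ y.2)]
        simpa using hinv
      have hplt : d⁻¹ y.1 < d⁻¹ y.2 := by
        rcases lt_trichotomy (d⁻¹ y.1) (d⁻¹ y.2) with h | h | h
        · exact h
        · exact absurd (by simpa using congrArg d h) (ne_of_lt hlt)
        · exfalso
          have := claimA (d⁻¹ y.2) (d⁻¹ y.1) h (by simpa using hlt)
          exact absurd this (lt_asymm hwlt)
      rw [Finset.mem_sdiff, hA, hB, Finset.mem_filter, Finset.mem_filter]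
      refine ⟨⟨Finset.mem_univ _, hplt, hwlt⟩, ?_⟩
      simp only [Finset.mem_univ, true_and, not_and, not_lt]
      intro _
      simpa using le_of_lt hlt
    · intro x _; simp
    · intro y _; simp
  have : len r w = (A \ B).card + B.card := by rw [hsplit]; rfl
  rw [this, hAB, WLaux.len_inv]
  have hBd : B.card = len r d := rfl
  rw [hBd, Nat.add_comm]
end
end

section
/- Let λ be an ℓ-partition of r and let w_{[λ]} ∈ S_r be defined by (a_{i−1}+l) w_{[λ]} = r − a_i + l for all i with a_{i−1} < a_i and 1 ≤ l ≤ a_i − a_{i−1}, where a_i = Σ_{j≤i} |λ^{(j)}|. Then w_λ = w_{(1)} · w_{(2)} ⋯ w_{(ℓ)} · w_{[λ]} with all lengths adding (ℓ(w_λ) = Σ ℓ(w_{(i)}) + ℓ(w_{[λ]})), where w_{(i)} is the permutation taking the i-th component of t^λ to the i-th component of t^λ w_{[λ]}^{-1}. -/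
noncomputable section

open scoped BigOperators

lemma psum_succ (f : ℕ → ℕ) (i : ℕ) : psum f (i+1) = psum f i + f i :=
  Finset.sum_range_succ f i

lemma psum_mono (f : ℕ → ℕ) {i j : ℕ} (h : i ≤ j) : psum f i ≤ psum f j :=
  Finset.sum_le_sum_of_subset (Finset.range_subset_range.2 h)

lemma psum_find (f : ℕ → ℕ) {x n : ℕ} (h : x < psum f n) :
    ∃ i, i < n ∧ psum f i ≤ x ∧ x < psum f (i+1) := by
  induction n with
  | zero => simp [psum] at h
  | succ n ih =>
    by_cases hx : x < psum f n
    · obtain ⟨i, h1, h2, h3⟩ := ih hx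
      exact ⟨i, Nat.lt_succ_of_lt h1, h2, h3⟩
    · exact ⟨n, Nat.lt_succ_self n, Nat.le_of_not_lt hx, h⟩


lemma psum_conjC (r : ℕ) (m : ℕ → ℕ) (hm : ∀ k, k < r → m k ≤ r) :
    psum (conjC r m) r = psum m r := by
  unfold psum conjC
  simp only [Finset.card_filter]
  rw [Finset.sum_comm]
  refine Finset.sum_congr rfl fun k hk => ?_
  simp only [Finset.mem_range] at hk
  have : ∀ j ∈ Finset.range r, (if j + 1 ≤ m k then 1 else 0) = if j < m k then 1 else 0 := by
    intro j _; split_ifs <;> omega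
  rw [Finset.sum_congr rfl this, ← Finset.card_filter]
  have : (Finset.range r).filter (fun j => j < m k) = Finset.range (m k) := by
    ext j; simp only [Finset.mem_filter, Finset.mem_range]
    exact ⟨fun h => h.2, fun h => ⟨lt_of_lt_of_le h (hm k hk), h⟩⟩
  simp [this]

/-- Let `l` be an `L`-multipartition of `r` with `[λ] = [a_0,…,a_L]`
(`asum r l i = a_i`).  Let `wb = w_{[λ]}` be the block-reversing permutation
(`(a_{i-1}+t) w_{[λ]} = r - a_i + t`), let `wlam = w_λ` (sending the row-reading index of
each cell to the row-reading index of the conjugate cell of `λ'`), and for each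
component `c` let `wi c = w_{(c)}` be the permutation supported on the `c`-th block
that takes the row-reading tableau of component `c` to its column-reading tableau
(within the block).  Then `w_λ = w_{(1)} ⋯ w_{(ℓ)} · w_{[λ]}` (in our left-evaluation
convention, `wlam = wb * w_{(ℓ)} ⋯ w_{(1)}`) and the lengths add:
`ℓ(w_λ) = Σ_c ℓ(w_{(c)}) + ℓ(w_{[λ]})`. -/
theorem wlambda_block_factorization (L r : ℕ) (l : ℕ → ℕ → ℕ)
    (hmp : IsMultipartitionOf L r l)
    (wb wlam : Equiv.Perm (Fin r))
    (hwb : ∀ (i : ℕ) (p : Fin r), asum r l i ≤ (p : ℕ) → (p : ℕ) < asum r l (i + 1) →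
      (wb p : ℕ) = r - asum r l (i + 1) + ((p : ℕ) - asum r l i))
    (hwlam : ∀ c a b, b < l c a →
      ∀ (h1 : rowIdxMP r l c a b < r) (h2 : rowIdxMP r (conjMP L r l) (L - 1 - c) b a < r),
        wlam ⟨rowIdxMP r l c a b, h1⟩ = ⟨rowIdxMP r (conjMP L r l) (L - 1 - c) b a, h2⟩)
    (wi : ℕ → Equiv.Perm (Fin r))
    (hwi1 : ∀ c a b, b < l c a →
      ∀ (h1 : rowIdxMP r l c a b < r) (h2 : asum r l c + psum (conjC r (l c)) b + a < r),
        wi c ⟨rowIdxMP r l c a b, h1⟩ = ⟨asum r l c + psum (conjC r (l c)) b + a, h2⟩)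
    (hwi2 : ∀ (c : ℕ) (p : Fin r),
      ((p : ℕ) < asum r l c ∨ asum r l (c + 1) ≤ (p : ℕ)) → wi c p = p) :
    wlam = wb * ((List.range L).reverse.map wi).prod ∧
    len r wlam = (∑ c ∈ Finset.range L, len r (wi c)) + len r wb := by
  obtain ⟨hL0, hdec, hrow0, htot⟩ := hmp
  have hAsucc : ∀ i, asum r l (i+1) = asum r l i + psum (l i) r :=
    fun i => Finset.sum_range_succ _ i
  have hAmono : ∀ {i j : ℕ}, i ≤ j → asum r l i ≤ asum r l j :=
    fun h => Finset.sum_le_sum_of_subset (Finset.range_subset_range.2 h)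
  have hAL : asum r l L = r := htot
  have hAle : ∀ i, i ≤ L → asum r l i ≤ r := fun i hi => le_trans (hAmono hi) (le_of_eq hAL)
  have hpsum_le : ∀ c, psum (l c) r ≤ r := by
    intro c
    by_cases hc : c < L
    · calc psum (l c) r ≤ ∑ c ∈ Finset.range L, psum (l c) r :=
            Finset.single_le_sum (f := fun c => psum (l c) r)
              (fun i _ => Nat.zero_le _) (Finset.mem_range.2 hc)
        _ = r := htot
    · have : psum (l c) r = 0 := by
        unfold psum
        exact Finset.sum_eq_zero fun j _ => hL0 c (Nat.le_of_not_lt hc) j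
      omega
  have hpart_le : ∀ c k, l c k ≤ r := by
    intro c k
    by_cases hk : k < r
    · calc l c k ≤ psum (l c) r :=
          Finset.single_le_sum (fun i _ => Nat.zero_le _) (Finset.mem_range.2 hk)
        _ ≤ r := hpsum_le c
    · rw [hrow0 c k (Nat.le_of_not_lt hk)]; exact Nat.zero_le _
  have hcell : ∀ p : Fin r, ∃ c a b, c < L ∧ b < l c a ∧ (p : ℕ) = rowIdxMP r l c a b := by
    intro p
    have hp : (p : ℕ) < psum (fun c => psum (l c) r) L := by
      show (p : ℕ) < asum r l L
      rw [hAL]; exact p.2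
    obtain ⟨c, hcL, hc1, hc2⟩ := psum_find _ hp
    have hc1' : asum r l c ≤ (p : ℕ) := hc1
    have hc2' : (p : ℕ) < asum r l (c+1) := hc2
    have hx : (p : ℕ) - asum r l c < psum (l c) r := by
      have := hAsucc c; omega
    obtain ⟨a, _, ha1, ha2⟩ := psum_find (l c) hx
    refine ⟨c, a, (p : ℕ) - asum r l c - psum (l c) a, hcL, ?_, ?_⟩
    · have := psum_succ (l c) a; omega
    · show (p : ℕ) = asum r l c + psum (l c) a + ((p : ℕ) - asum r l c - psum (l c) a)
      omega
  have hrowlt : ∀ c a b, c < L → b < l c a → psum (l c) a + b < psum (l c) r := by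
    intro c a b _ hb
    have har : a < r := by
      by_contra h
      rw [hrow0 c a (Nat.le_of_not_lt h)] at hb; omega
    have h1 : psum (l c) (a+1) ≤ psum (l c) r := psum_mono _ har
    have := psum_succ (l c) a; omega
  have hconjcell : ∀ c a b, b < l c a → a < conjC r (l c) b := by
    intro c a b hb
    have har : a < r := by
      by_contra h
      rw [hrow0 c a (Nat.le_of_not_lt h)] at hb; omega
    have hsub : Finset.range (a+1) ⊆ (Finset.range r).filter (fun k => b + 1 ≤ l c k) := by
      intro k hk
      simp only [Finset.mem_range] at hk
      simp only [Finset.mem_filter, Finset.mem_range]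
      have : l c a ≤ l c k := hdec c k a (by omega)
      exact ⟨by omega, by omega⟩
    have := Finset.card_le_card hsub
    simpa [conjC] using this
  have hconjsum : ∀ c, psum (conjC r (l c)) r = psum (l c) r :=
    fun c => psum_conjC r (l c) (fun k _ => hpart_le c k)
  -- block membership function
  have hblk_ex : ∀ p : Fin r, ∃ c a b, c < L ∧ b < l c a ∧ (p : ℕ) = rowIdxMP r l c a b ∧
      asum r l c ≤ (p : ℕ) ∧ (p : ℕ) < asum r l (c+1) := by
    intro p
    obtain ⟨c, a, b, hcL, hb, hp⟩ := hcell p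
    refine ⟨c, a, b, hcL, hb, hp, ?_, ?_⟩
    · rw [hp]; unfold rowIdxMP; omega
    · rw [hp]; unfold rowIdxMP
      have := hrowlt c a b hcL hb
      have := hAsucc c; omega
  classical
  set blk : Fin r → ℕ :=
    fun p => ((Finset.range L).filter (fun i => asum r l (i+1) ≤ (p : ℕ))).card with hblkdef
  have hblk : ∀ (p : Fin r) (c : ℕ), c < L → asum r l c ≤ (p : ℕ) →
      (p : ℕ) < asum r l (c+1) → blk p = c := by
    intro p c hcL h1 h2
    have : (Finset.range L).filter (fun i => asum r l (i+1) ≤ (p : ℕ)) = Finset.range c := by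
      ext i
      simp only [Finset.mem_filter, Finset.mem_range]
      constructor
      · rintro ⟨hiL, hi⟩
        by_contra h
        have : asum r l (c+1) ≤ asum r l (i+1) := hAmono (by omega)
        omega
      · intro hic
        refine ⟨by omega, ?_⟩
        have : asum r l (i+1) ≤ asum r l c := hAmono (by omega)
        omega
    rw [hblkdef]; simp only; rw [this, Finset.card_range]
  have hblkspec : ∀ p : Fin r, ∃ a b, blk p < L ∧ b < l (blk p) a ∧
      (p : ℕ) = rowIdxMP r l (blk p) a b ∧
      asum r l (blk p) ≤ (p : ℕ) ∧ (p : ℕ) < asum r l (blk p + 1) := by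
    intro p
    obtain ⟨c, a, b, hcL, hb, hp, h1, h2⟩ := hblk_ex p
    have hc : blk p = c := hblk p c hcL h1 h2
    exact ⟨a, b, by rw [hc]; exact hcL, by rw [hc]; exact hb, by rw [hc]; exact hp,
      by rw [hc]; exact h1, by rw [hc]; exact h2⟩
  -- asum of the conjugate multipartition
  have hasumconj : ∀ i, i ≤ L → asum r (conjMP L r l) i = r - asum r l (L - i) := by
    intro i
    induction i with
    | zero =>
      intro _
      rw [Nat.sub_zero, hAL, Nat.sub_self]
      simp [asum]
    | succ i ih =>
      intro hi
      have hiL : i < L := hi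
      have step : asum r (conjMP L r l) (i+1) =
          asum r (conjMP L r l) i + psum (conjMP L r l i) r := Finset.sum_range_succ _ i
      have hcm : conjMP L r l i = conjC r (l (L - 1 - i)) := by
        unfold conjMP; rw [if_pos hiL]
      have hps : psum (conjMP L r l i) r = psum (l (L - 1 - i)) r := by
        rw [hcm]; exact hconjsum (L - 1 - i)
      have hstep2 : asum r l (L - i) = asum r l (L - i - 1) + psum (l (L - i - 1)) r := by
        have := hAsucc (L - i - 1)
        have he : L - i - 1 + 1 = L - i := by omega
        rw [he] at this; exact this
      have he2 : L - i - 1 = L - 1 - i := by omega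
      have hmle : asum r l (L - i) ≤ r := hAle _ (Nat.sub_le L i)
      have hmle2 : asum r l (L - i - 1) ≤ asum r l (L - i) := hAmono (Nat.sub_le _ 1)
      have he4 : asum r l (L - (i + 1)) = asum r l (L - i - 1) := by
        have : L - (i + 1) = L - i - 1 := by omega
        rw [this]
      rw [step, hps, ih (by omega), ← he2]
      omega
  -- the key pointwise computation
  have hkey : ∀ p : Fin r,
      asum r l (blk p) ≤ (wi (blk p) p : ℕ) ∧
      (wi (blk p) p : ℕ) < asum r l (blk p + 1) ∧
      (wlam p : ℕ) = r - asum r l (blk p + 1) + ((wi (blk p) p : ℕ) - asum r l (blk p)) := by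
    intro p
    obtain ⟨a, b, hcL, hb, hp, h1, h2⟩ := hblkspec p
    set c := blk p with hc
    have hx : psum (conjC r (l c)) b + a < psum (l c) r := by
      have hbr : b < r := by have := hpart_le c a; omega
      have hac : a < conjC r (l c) b := hconjcell c a b hb
      have hs1 : psum (conjC r (l c)) (b+1) ≤ psum (conjC r (l c)) r := psum_mono _ hbr
      have hs2 := psum_succ (conjC r (l c)) b
      have hs3 := hconjsum c
      omega
    have hA1 : asum r l (c+1) ≤ r := hAle _ (by omega)
    have hAc := hAsucc c
    have hr1 : rowIdxMP r l c a b < r := by rw [← hp]; exact p.2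
    have hr2 : asum r l c + psum (conjC r (l c)) b + a < r := by omega
    have hpfin : p = ⟨rowIdxMP r l c a b, hr1⟩ := Fin.ext hp
    have hwic : (wi c p : ℕ) = asum r l c + psum (conjC r (l c)) b + a := by
      rw [hpfin, hwi1 c a b hb hr1 hr2]
    refine ⟨by omega, by omega, ?_⟩
    -- now wlam
    have hLc2 : L - 1 - (L - 1 - c) = c := by omega
    have hcmc : conjMP L r l (L - 1 - c) = conjC r (l c) := by
      unfold conjMP; rw [if_pos (by omega : L - 1 - c < L), hLc2]
    have hasc : asum r (conjMP L r l) (L - 1 - c) = r - asum r l (c + 1) := by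
      rw [hasumconj (L - 1 - c) (by omega)]
      have : L - (L - 1 - c) = c + 1 := by omega
      rw [this]
    have hrconj : rowIdxMP r (conjMP L r l) (L - 1 - c) b a =
        r - asum r l (c+1) + (psum (conjC r (l c)) b + a) := by
      unfold rowIdxMP
      rw [hasc, hcmc]; omega
    have hr3 : rowIdxMP r (conjMP L r l) (L - 1 - c) b a < r := by rw [hrconj]; omega
    have := hwlam c a b hb hr1 hr3
    rw [← hpfin] at this
    have hv : (wlam p : ℕ) = rowIdxMP r (conjMP L r l) (L - 1 - c) b a := by
      rw [this]
    rw [hv, hrconj, hwic]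
    omega
  have hfix : ∀ (j : ℕ) (p : Fin r), j ≠ blk p → wi j p = p := by
    intro j p hj
    obtain ⟨a, b, hcL, hb, hp, h1, h2⟩ := hblkspec p
    rcases Nat.lt_or_ge j (blk p) with h | h
    · exact hwi2 j p (Or.inr (le_trans (hAmono (by omega)) h1))
    · exact hwi2 j p (Or.inl (lt_of_lt_of_le h2 (hAmono (by omega))))
  have hblkwi : ∀ p : Fin r, blk (wi (blk p) p) = blk p := by
    intro p
    obtain ⟨h1, h2, _⟩ := hkey p
    obtain ⟨a, b, hcL, _, _, _, _⟩ := hblkspec p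
    exact hblk _ _ hcL h1 h2
  -- product computation
  have hprodgen : ∀ s : List ℕ, s.Nodup → ∀ p : Fin r,
      ((s.map wi).prod) p = if blk p ∈ s then wi (blk p) p else p := by
    intro s
    induction s with
    | nil => intro _ p; simp
    | cons j t ih =>
      intro hnd p
      have hjt : j ∉ t := (List.nodup_cons.1 hnd).1
      have hndt : t.Nodup := (List.nodup_cons.1 hnd).2
      have : ((j :: t).map wi).prod = wi j * (t.map wi).prod := by simp
      rw [this, Equiv.Perm.mul_apply, ih hndt p]
      by_cases hm : blk p ∈ t
      · rw [if_pos hm, if_pos (List.mem_cons_of_mem j hm)]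
        have hjne : j ≠ blk p := fun h => hjt (h ▸ hm)
        have : j ≠ blk (wi (blk p) p) := by rw [hblkwi p]; exact hjne
        exact hfix j _ this
      · rw [if_neg hm]
        by_cases hj : j = blk p
        · rw [hj, if_pos List.mem_cons_self]
        · rw [if_neg (by simp [hm]; exact fun h => hj h.symm), hfix j p (by exact hj)]
  have hprod : ∀ p : Fin r, (((List.range L).reverse.map wi).prod) p = wi (blk p) p := by
    intro p
    obtain ⟨a, b, hcL, _, _, _, _⟩ := hblkspec p
    rw [hprodgen _ (List.nodup_reverse.2 List.nodup_range) p, if_pos (by simpa using hcL)]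
  have hwbval : ∀ p : Fin r,
      (wb p : ℕ) = r - asum r l (blk p + 1) + ((p : ℕ) - asum r l (blk p)) := by
    intro p
    obtain ⟨a, b, hcL, hb, hp, h1, h2⟩ := hblkspec p
    exact hwb (blk p) p h1 h2
  have hblkA : ∀ p : Fin r, blk p < L ∧ asum r l (blk p) ≤ (p : ℕ) ∧
      (p : ℕ) < asum r l (blk p + 1) := by
    intro p
    obtain ⟨a, b, hcL, hb, hp, h1, h2⟩ := hblkspec p
    exact ⟨hcL, h1, h2⟩
  have hblkmono : ∀ p q : Fin r, p < q → blk p ≤ blk q := by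
    intro p q hpq
    by_contra h
    obtain ⟨_, _, h2⟩ := hblkA q
    obtain ⟨_, h1, _⟩ := hblkA p
    have : asum r l (blk q + 1) ≤ asum r l (blk p) := hAmono (by omega)
    have : (q : ℕ) < (p : ℕ) := by omega
    omega
  constructor
  · ext p
    rw [Equiv.Perm.mul_apply, hprod p]
    obtain ⟨h1, h2, h3⟩ := hkey p
    have hbw := hblkwi p
    have := hwbval (wi (blk p) p)
    rw [hbw] at this
    omega
  · -- length computation
    have hcard : ∀ w : Equiv.Perm (Fin r), len r w =
        ∑ pq ∈ (Finset.univ : Finset (Fin r × Fin r)),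
          if pq.1 < pq.2 ∧ w pq.2 < w pq.1 then 1 else 0 := by
      intro w; rw [len, Finset.card_filter]
    rw [hcard wlam, hcard wb]
    have : ∑ c ∈ Finset.range L, len r (wi c) =
        ∑ pq ∈ (Finset.univ : Finset (Fin r × Fin r)), ∑ c ∈ Finset.range L,
          if pq.1 < pq.2 ∧ wi c pq.2 < wi c pq.1 then 1 else 0 := by
      rw [Finset.sum_comm]
      exact Finset.sum_congr rfl fun c _ => hcard (wi c)
    rw [this, ← Finset.sum_add_distrib]
    refine Finset.sum_congr rfl fun pq _ => ?_
    obtain ⟨p, q⟩ := pq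
    simp only
    by_cases hpq : p < q
    · have hAp := hblkA p
      have hAq := hblkA q
      have hkp := hkey p
      have hkq := hkey q
      have hbpq : blk p ≤ blk q := hblkmono p q hpq
      have hA1 : asum r l (blk p + 1) ≤ r := hAle _ (by omega)
      have hA2 : asum r l (blk q + 1) ≤ r := hAle _ (by omega)
      by_cases hbb : blk p = blk q
      · -- same block
        have hAq' := hAq
        rw [← hbb] at hAq'
        have hwb0 : ¬ (wb q < wb p) := by
          intro h
          have h' : (wb q : ℕ) < (wb p : ℕ) := h
          rw [hwbval p, hwbval q, ← hbb] at h'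
          have hpq' : (p : ℕ) < (q : ℕ) := hpq
          omega
        have hwlamiff : (wlam q < wlam p) ↔ (wi (blk p) q < wi (blk p) p) := by
          obtain ⟨k1, k2, k3⟩ := hkp
          obtain ⟨k4, k5, k6⟩ := hkq
          rw [← hbb] at k4 k5 k6
          constructor
          · intro h; have h' : (wlam q : ℕ) < (wlam p : ℕ) := h
            have : (wi (blk p) q : ℕ) < (wi (blk p) p : ℕ) := by omega
            exact this
          · intro h; have h' : (wi (blk p) q : ℕ) < (wi (blk p) p : ℕ) := h
            have : (wlam q : ℕ) < (wlam p : ℕ) := by omega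
            exact this
        have hsum : (∑ c ∈ Finset.range L, if p < q ∧ wi c q < wi c p then 1 else 0) =
            if p < q ∧ wi (blk p) q < wi (blk p) p then 1 else 0 := by
          refine Finset.sum_eq_single (blk p) ?_ ?_
          · intro c _ hc
            rw [if_neg]
            rintro ⟨_, hlt⟩
            rw [hfix c p hc, hfix c q (by rw [← hbb]; exact hc)] at hlt
            exact absurd hpq (not_lt.2 (le_of_lt hlt))
          · intro h
            exact absurd (Finset.mem_range.2 hAp.1) h
        rw [hsum, if_neg (show ¬(p < q ∧ wb q < wb p) from fun h => hwb0 h.2)]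
        by_cases h : wi (blk p) q < wi (blk p) p
        · rw [if_pos (show p < q ∧ wlam q < wlam p from ⟨hpq, hwlamiff.2 h⟩),
            if_pos (show p < q ∧ wi (blk p) q < wi (blk p) p from ⟨hpq, h⟩)]
        · rw [if_neg (show ¬(p < q ∧ wlam q < wlam p) from fun hh => h (hwlamiff.1 hh.2)),
            if_neg (show ¬(p < q ∧ wi (blk p) q < wi (blk p) p) from fun hh => h hh.2)]
      · -- different blocks
        have hlt : blk p < blk q := lt_of_le_of_ne hbpq hbb
        have hAmid : asum r l (blk p + 1) ≤ asum r l (blk q) := hAmono (by omega)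
        have hwb1 : wb q < wb p := by
          show (wb q : ℕ) < (wb p : ℕ)
          rw [hwbval p, hwbval q]
          omega
        have hwlam1 : wlam q < wlam p := by
          show (wlam q : ℕ) < (wlam p : ℕ)
          obtain ⟨k1, k2, k3⟩ := hkp
          obtain ⟨k4, k5, k6⟩ := hkq
          omega
        have hsum0 : (∑ c ∈ Finset.range L, if p < q ∧ wi c q < wi c p then 1 else 0) = 0 := by
          refine Finset.sum_eq_zero fun c _ => ?_
          rw [if_neg]
          rintro ⟨_, hlt2⟩
          have hlt2' : (wi c q : ℕ) < (wi c p : ℕ) := hlt2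
          by_cases hc1 : c = blk p
          · have : wi c q = q := hfix c q (by omega)
            rw [this] at hlt2'
            obtain ⟨k1, k2, k3⟩ := hkp
            rw [← hc1] at k1 k2
            obtain ⟨_, k4, _⟩ := hAq
            have : asum r l (c + 1) ≤ asum r l (blk q) := by rw [hc1]; exact hAmid
            omega
          · by_cases hc2 : c = blk q
            · have : wi c p = p := hfix c p (by omega)
              rw [this] at hlt2'
              obtain ⟨k4, k5, k6⟩ := hkq
              rw [← hc2] at k4 k5
              obtain ⟨_, _, k1⟩ := hAp
              have : asum r l (blk p + 1) ≤ asum r l c := by rw [hc2]; exact hAmid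
              omega
            · rw [hfix c p (by omega), hfix c q (by omega)] at hlt2'
              have : (p : ℕ) < (q : ℕ) := hpq
              omega
        rw [hsum0, if_pos (show p < q ∧ wlam q < wlam p from ⟨hpq, hwlam1⟩),
          if_pos (show p < q ∧ wb q < wb p from ⟨hpq, hwb1⟩)]
    · rw [if_neg (fun h => hpq h.1), if_neg (fun h => hpq h.1),
        Finset.sum_eq_zero fun c _ => if_neg (fun h => hpq h.1)]
end
end
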